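/- Let (Y_i)_{i∈I} be a family of F_u-measurable random variables with the lattice property and E(ess sup_i |Y_i|) < ∞. Then there exists a sequence (i_n) in I such that (Y_{i_n}) is almost surely non-decreasing and converges almost surely to ess sup_{i∈I} Y_i; similarly there is a sequence along which the family decreases to the essential infimum. -/

import Mathlib

open MeasureTheory Filter


lemma aux_sup_seq {Ω : Type*} {m : MeasurableSpace Ω}
    (μ : Measure Ω) [IsProbabilityMeasure μ] {I : Type*} [Nonempty I]
    (Y : I → Ω → ℝ) (hmeas : ∀ i, Measurable (Y i))
    (hlat : ∀ i j : I, ∃ k, ∀ᵐ ω ∂μ, max (Y i ω) (Y j ω) ≤ Y k ω)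
    (g : Ω → ℝ) (hg : Integrable g μ) (hgb : ∀ i, ∀ᵐ ω ∂μ, |Y i ω| ≤ g ω)
    (Z : Ω → ℝ) (hZmeas : Measurable Z)
    (hZub : ∀ i, ∀ᵐ ω ∂μ, Y i ω ≤ Z ω)
    (hZlub : ∀ Z' : Ω → ℝ, Measurable Z' → (∀ i, ∀ᵐ ω ∂μ, Y i ω ≤ Z' ω) →
      ∀ᵐ ω ∂μ, Z ω ≤ Z' ω) :
    ∃ f : ℕ → I, (∀ᵐ ω ∂μ, Monotone fun n => Y (f n) ω) ∧
      (∀ᵐ ω ∂μ, Tendsto (fun n => Y (f n) ω) atTop (nhds (Z ω))) := by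
  have hint : ∀ i, Integrable (Y i) μ := fun i =>
    hg.mono' (hmeas i).aestronglyMeasurable
      ((hgb i).mono fun ω h => by simpa [Real.norm_eq_abs] using h)
  set s : Set ℝ := Set.range (fun i => ∫ ω, Y i ω ∂μ) with hs
  have hsne : s.Nonempty := Set.range_nonempty _
  have hbdd : BddAbove s := by
    refine ⟨∫ ω, g ω ∂μ, ?_⟩
    rintro x ⟨i, rfl⟩
    exact integral_mono_ae (hint i) hg ((hgb i).mono fun ω h => le_trans (le_abs_self _) h)
  obtain ⟨u, hu_mono, hu_tend, hu_mem⟩ := exists_seq_tendsto_sSup hsne hbdd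
  choose j hj using hu_mem
  have K : ∀ a b : I, {k : I // ∀ᵐ ω ∂μ, max (Y a ω) (Y b ω) ≤ Y k ω} := fun a b =>
    ⟨(hlat a b).choose, (hlat a b).choose_spec⟩
  let f : ℕ → I := fun n => Nat.rec (j 0) (fun n fn => (K fn (j (n + 1))).1) n
  have hstep : ∀ n, ∀ᵐ ω ∂μ, max (Y (f n) ω) (Y (j (n + 1)) ω) ≤ Y (f (n + 1)) ω :=
    fun n => (K (f n) (j (n + 1))).2
  have ha_le : ∀ n, ∫ ω, Y (f n) ω ∂μ ≤ sSup s := fun n => le_csSup hbdd ⟨f n, rfl⟩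
  have hjle : ∀ n, ∀ᵐ ω ∂μ, Y (j n) ω ≤ Y (f n) ω := by
    intro n
    cases n with
    | zero => exact Eventually.of_forall fun ω => le_refl _
    | succ n => exact (hstep n).mono fun ω h => le_trans (le_max_right _ _) h
  have ha_ge : ∀ n, u n ≤ ∫ ω, Y (f n) ω ∂μ := fun n => by
    rw [← hj n]; exact integral_mono_ae (hint _) (hint _) (hjle n)
  have ha_tend : Tendsto (fun n => ∫ ω, Y (f n) ω ∂μ) atTop (nhds (sSup s)) :=
    tendsto_of_tendsto_of_tendsto_of_le_of_le hu_tend tendsto_const_nhds ha_ge ha_le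
  set L : Ω → ℝ := fun ω => ⨆ n, Y (f n) ω with hL
  have hLmeas : Measurable L := Measurable.iSup fun n => hmeas (f n)
  have hmono_ae : ∀ᵐ ω ∂μ, Monotone fun n => Y (f n) ω := by
    filter_upwards [ae_all_iff.2 hstep] with ω hω
    exact monotone_nat_of_le_succ fun n => le_trans (le_max_left _ _) (hω n)
  have htend_ae : ∀ᵐ ω ∂μ, Tendsto (fun n => Y (f n) ω) atTop (nhds (L ω)) := by
    filter_upwards [hmono_ae, ae_all_iff.2 fun n => hgb (f n)] with ω h1 h2
    exact tendsto_atTop_ciSup h1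
      ⟨g ω, by rintro x ⟨n, rfl⟩; exact le_trans (le_abs_self _) (h2 n)⟩
  have key : ∀ i, ∀ᵐ ω ∂μ, Y i ω ≤ L ω := by
    intro i
    set F : ℕ → Ω → ℝ := fun n ω => max (Y i ω) (Y (f n) ω) - Y (f n) ω with hF
    have hFmeas : ∀ n, Measurable (F n) := fun n =>
      ((hmeas i).max (hmeas (f n))).sub (hmeas (f n))
    have hFb : ∀ n, ∀ᵐ ω ∂μ, ‖F n ω‖ ≤ 2 * g ω := by
      intro n
      filter_upwards [hgb i, hgb (f n)] with ω h1 h2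
      have hn : 0 ≤ F n ω := sub_nonneg.2 (le_max_right _ _)
      rw [Real.norm_eq_abs, abs_of_nonneg hn]
      have h3 : max (Y i ω) (Y (f n) ω) ≤ g ω := max_le (abs_le.1 h1).2 (abs_le.1 h2).2
      have h4 := (abs_le.1 h2).1
      simp only [F]
      linarith
    have hFint : ∀ n, Integrable (F n) μ := fun n =>
      (hg.const_mul 2).mono' (hFmeas n).aestronglyMeasurable (hFb n)
    have hmaxint : ∀ n, Integrable (fun ω => max (Y i ω) (Y (f n) ω)) μ := by
      intro n
      refine hg.mono' ((hmeas i).max (hmeas (f n))).aestronglyMeasurable ?_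
      filter_upwards [hgb i, hgb (f n)] with ω h1 h2
      rw [Real.norm_eq_abs]
      exact le_trans (abs_max_le_max_abs_abs) (max_le h1 h2)
    have hFle : ∀ n, ∫ ω, F n ω ∂μ ≤ sSup s - ∫ ω, Y (f n) ω ∂μ := by
      intro n
      have hk := (hlat i (f n)).choose_spec
      have h1 : ∫ ω, max (Y i ω) (Y (f n) ω) ∂μ ≤ ∫ ω, Y (hlat i (f n)).choose ω ∂μ :=
        integral_mono_ae (hmaxint n) (hint _) hk
      have h2 : ∫ ω, Y (hlat i (f n)).choose ω ∂μ ≤ sSup s :=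
        le_csSup hbdd ⟨(hlat i (f n)).choose, rfl⟩
      have := integral_sub (hmaxint n) (hint (f n))
      simp only [F]
      rw [this]
      linarith
    have hF0 : ∀ n, 0 ≤ ∫ ω, F n ω ∂μ := fun n =>
      integral_nonneg fun ω => sub_nonneg.2 (le_max_right _ _)
    have htend0 : Tendsto (fun n => ∫ ω, F n ω ∂μ) atTop (nhds 0) := by
      have h5 : Tendsto (fun n => sSup s - ∫ ω, Y (f n) ω ∂μ) atTop (nhds 0) := by
        have := (tendsto_const_nhds (x := sSup s) (f := atTop (α := ℕ))).sub ha_tend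
        simpa using this
      exact tendsto_of_tendsto_of_tendsto_of_le_of_le tendsto_const_nhds h5 hF0 hFle
    have hlimae : ∀ᵐ ω ∂μ, Tendsto (fun n => F n ω) atTop
        (nhds (max (Y i ω) (L ω) - L ω)) := by
      filter_upwards [htend_ae] with ω hω
      exact (tendsto_const_nhds.max hω).sub hω
    have hDCT : Tendsto (fun n => ∫ ω, F n ω ∂μ) atTop
        (nhds (∫ ω, (max (Y i ω) (L ω) - L ω) ∂μ)) :=
      tendsto_integral_of_dominated_convergence (fun ω => 2 * g ω)
        (fun n => (hFmeas n).aestronglyMeasurable) (hg.const_mul 2) hFb hlimae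
    have hintlim : Integrable (fun ω => max (Y i ω) (L ω) - L ω) μ :=
      (hg.const_mul 2).mono' (((hmeas i).max hLmeas).sub hLmeas).aestronglyMeasurable
        (by
          refine (ae_all_iff.2 hFb).mp (hlimae.mono fun ω hω hb => ?_)
          exact le_of_tendsto' (hω.norm) fun n => hb n)
    have hzero : ∫ ω, (max (Y i ω) (L ω) - L ω) ∂μ = 0 := tendsto_nhds_unique hDCT htend0
    have hZeroae := (integral_eq_zero_iff_of_nonneg_ae
      (Eventually.of_forall fun ω => sub_nonneg.2 (le_max_right _ _)) hintlim).1 hzero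
    filter_upwards [hZeroae] with ω hω
    have hmax : max (Y i ω) (L ω) = L ω := by
      have : max (Y i ω) (L ω) - L ω = 0 := hω
      linarith
    calc Y i ω ≤ max (Y i ω) (L ω) := le_max_left _ _
      _ = L ω := hmax
  have hZL : ∀ᵐ ω ∂μ, Z ω ≤ L ω := hZlub L hLmeas key
  have hLZ : ∀ᵐ ω ∂μ, L ω ≤ Z ω := by
    filter_upwards [htend_ae, ae_all_iff.2 fun n => hZub (f n)] with ω h1 h2
    exact le_of_tendsto' h1 h2
  refine ⟨f, hmono_ae, ?_⟩
  filter_upwards [htend_ae, hZL, hLZ] with ω h1 h2 h3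
  rwa [le_antisymm h3 h2] at h1

/-- Let `(Y_i)_{i∈I}` be a family of measurable random variables with the lattice
property and `E(ess sup_i |Y_i|) < ∞` (encoded by an integrable dominating
function `g`). If `Z` is the essential supremum of the family (the least upper
bound in the a.s. order) and `W` its essential infimum, then there exists a
sequence along which the family increases a.s. to `Z`, and a sequence along which
it decreases a.s. to `W`. -/
theorem essSup_attained_by_monotone_sequence {Ω : Type*} {m : MeasurableSpace Ω}
    (μ : Measure Ω) [IsProbabilityMeasure μ] {I : Type*} [Nonempty I]
    (Y : I → Ω → ℝ) (hmeas : ∀ i, Measurable (Y i))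
    (hlat : ∀ i j : I,
      (∃ k, ∀ᵐ ω ∂μ, max (Y i ω) (Y j ω) ≤ Y k ω) ∧
      (∃ l, ∀ᵐ ω ∂μ, Y l ω ≤ min (Y i ω) (Y j ω)))
    (g : Ω → ℝ) (hg : Integrable g μ) (hgb : ∀ i, ∀ᵐ ω ∂μ, |Y i ω| ≤ g ω)
    (Z W : Ω → ℝ) (hZmeas : Measurable Z) (hWmeas : Measurable W)
    (hZub : ∀ i, ∀ᵐ ω ∂μ, Y i ω ≤ Z ω)
    (hZlub : ∀ Z' : Ω → ℝ, Measurable Z' → (∀ i, ∀ᵐ ω ∂μ, Y i ω ≤ Z' ω) →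
      ∀ᵐ ω ∂μ, Z ω ≤ Z' ω)
    (hWlb : ∀ i, ∀ᵐ ω ∂μ, W ω ≤ Y i ω)
    (hWglb : ∀ W' : Ω → ℝ, Measurable W' → (∀ i, ∀ᵐ ω ∂μ, W' ω ≤ Y i ω) →
      ∀ᵐ ω ∂μ, W' ω ≤ W ω) :
    (∃ f : ℕ → I, (∀ᵐ ω ∂μ, Monotone fun n => Y (f n) ω) ∧
      (∀ᵐ ω ∂μ, Tendsto (fun n => Y (f n) ω) atTop (nhds (Z ω)))) ∧
    (∃ f : ℕ → I, (∀ᵐ ω ∂μ, Antitone fun n => Y (f n) ω) ∧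
      (∀ᵐ ω ∂μ, Tendsto (fun n => Y (f n) ω) atTop (nhds (W ω)))) := by
  constructor
  · exact aux_sup_seq μ Y hmeas (fun i j => (hlat i j).1) g hg hgb Z hZmeas hZub hZlub
  · have hlat' : ∀ i j : I, ∃ k, ∀ᵐ ω ∂μ,
        max (-(Y i ω)) (-(Y j ω)) ≤ -(Y k ω) := by
      intro i j
      obtain ⟨l, hl⟩ := (hlat i j).2
      refine ⟨l, hl.mono fun ω h => ?_⟩
      rw [max_neg_neg]
      exact neg_le_neg h
    obtain ⟨f, h1, h2⟩ := aux_sup_seq μ (fun i ω => -(Y i ω)) (fun i => (hmeas i).neg)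
      hlat' g hg (fun i => (hgb i).mono fun ω h => by simpa using h)
      (fun ω => -(W ω)) hWmeas.neg
      (fun i => (hWlb i).mono fun ω h => neg_le_neg h)
      (fun Z' hZ' h => by
        have := hWglb (fun ω => -(Z' ω)) hZ'.neg
          (fun i => (h i).mono fun ω h => by linarith)
        exact this.mono fun ω h => by linarith)
    refine ⟨f, h1.mono fun ω hω => ?_, h2.mono fun ω hω => ?_⟩
    · intro a b hab
      have := hω hab
      simpa using this
    · have := hω.neg
      simpa using this
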